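/- arXiv:2302.00213 — 4 statements merged into one kernel-verified Lean document; each statement's English description precedes it below -/
import Mathlib

section
/- Let $w : S \to [0,1]$ on a finite set $S$ with $\sum_{h \in S'} w_h \geq 1$ for a subset $S' \subseteq S$ with $|S'| \leq |S|$, and suppose $|S| \geq 3$. Then there exists an integer $s$ with $2^{-s} \geq 1/|S|^2$ such that the bucket $\{h \in S' : 2^{-s} \leq w_h \leq 2^{-(s-1)}\}$ has cardinality at least $1/(6 \cdot 2^{-s} \log_2 |S|)$. -/
open Finset

lemma aux_sum_biUnion_le {ι α : Type*} [DecidableEq α] [DecidableEq ι] (t : Finset ι)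
    (B : ι → Finset α) (f : α → ℝ) (hf : ∀ a, 0 ≤ f a) :
    ∑ a ∈ t.biUnion B, f a ≤ ∑ i ∈ t, ∑ a ∈ B i, f a := by
  classical
  refine Finset.induction_on t (by simp) (fun i t hi ih => ?_)
  rw [Finset.biUnion_insert, Finset.sum_insert hi]
  have h1 : ∑ a ∈ B i ∪ t.biUnion B, f a + ∑ a ∈ (B i) ∩ t.biUnion B, f a
      = ∑ a ∈ B i, f a + ∑ a ∈ t.biUnion B, f a := Finset.sum_union_inter
  have h2 : 0 ≤ ∑ a ∈ (B i) ∩ t.biUnion B, f a := Finset.sum_nonneg fun a _ => hf a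
  linarith

lemma aux_bucket (x : ℝ) (h0 : 0 < x) (h1 : x ≤ 1) :
    (2:ℝ) ^ (-(⌈Real.logb 2 x⁻¹⌉₊ : ℤ)) ≤ x ∧
      x ≤ (2:ℝ) ^ (-((⌈Real.logb 2 x⁻¹⌉₊ : ℤ) - 1)) := by
  set L := Real.logb 2 x⁻¹ with hLdef
  have hL0 : 0 ≤ L := Real.logb_nonneg one_lt_two ((one_le_inv₀ h0).2 h1)
  have hrw : (2:ℝ) ^ L = x⁻¹ := Real.rpow_logb two_pos (by norm_num) (by positivity)
  set s := ⌈L⌉₊ with hs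
  have hle : L ≤ (s:ℝ) := Nat.le_ceil L
  have hlt : (s:ℝ) - 1 < L := by
    have := Nat.ceil_lt_add_one hL0
    linarith
  have h2 : (2:ℝ) ^ (-L) = x := by
    rw [Real.rpow_neg (by norm_num), hrw, inv_inv]
  constructor
  · have h3 : (2:ℝ) ^ (-(s:ℝ)) ≤ (2:ℝ) ^ (-L) :=
      (Real.rpow_le_rpow_left_iff (by norm_num : (1:ℝ) < 2)).2 (by linarith)
    rw [h2] at h3
    calc (2:ℝ) ^ (-(s:ℤ)) = (2:ℝ) ^ (-(s:ℝ)) := by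
          rw [← Real.rpow_intCast]; norm_num
      _ ≤ x := h3
  · have h3 : (2:ℝ) ^ (-L) ≤ (2:ℝ) ^ (-((s:ℝ) - 1)) :=
      (Real.rpow_le_rpow_left_iff (by norm_num : (1:ℝ) < 2)).2 (by linarith)
    rw [h2] at h3
    calc x ≤ (2:ℝ) ^ (-((s:ℝ) - 1)) := h3
      _ = (2:ℝ) ^ (-((s:ℤ) - 1)) := by
          rw [← Real.rpow_intCast]; norm_num

lemma aux_ceil_le (x : ℝ) (h0 : 0 < x) (m : ℕ) (hx : (2:ℝ) ^ (-(m:ℤ)) ≤ x) :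
    ⌈Real.logb 2 x⁻¹⌉₊ ≤ m := by
  apply Nat.ceil_le.2
  rw [Real.logb_le_iff_le_rpow one_lt_two (by positivity)]
  rw [inv_le_comm₀ h0 (by positivity)]
  calc ((2:ℝ) ^ ((m:ℕ):ℝ))⁻¹ = (2:ℝ) ^ (-((m:ℕ):ℝ)) := by
        rw [← Real.rpow_neg (by norm_num)]
    _ = (2:ℝ) ^ (-(m:ℤ)) := by rw [← Real.rpow_intCast]; norm_num
    _ ≤ x := hx

lemma aux_double (s : ℤ) : (2:ℝ) ^ (-(s - 1)) = 2 * (2:ℝ) ^ (-s) := by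
  rw [show -(s - 1) = 1 + (-s) by ring, zpow_add₀ (by norm_num : (2:ℝ) ≠ 0), zpow_one]

/-- Bucketing with a cardinality bound: if `w : S → [0,1]` has weight at least `1` on a
subset `S'` and `|S| ≥ 3`, then there is a dyadic scale `2^{-s} ≥ 1/|S|²` whose bucket in
`S'` has cardinality at least `1/(6 · 2^{-s} · log₂ |S|)`. -/
theorem stmt_4 (S : Type*) [Fintype S] [DecidableEq S]
    (w : S → ℝ) (hw0 : ∀ h, 0 ≤ w h) (hw1 : ∀ h, w h ≤ 1)
    (S' : Finset S) (hS' : (1 : ℝ) ≤ ∑ h ∈ S', w h)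
    (hS : 3 ≤ Fintype.card S) :
    ∃ s : ℕ,
      (1 : ℝ) / (Fintype.card S : ℝ) ^ 2 ≤ (2 : ℝ) ^ (-(s : ℤ)) ∧
      (1 : ℝ) / (6 * (2 : ℝ) ^ (-(s : ℤ)) * Real.logb 2 (Fintype.card S)) ≤
        ((S'.filter (fun h => (2 : ℝ) ^ (-(s : ℤ)) ≤ w h ∧
            w h ≤ (2 : ℝ) ^ (-((s : ℤ) - 1)))).card : ℝ) := by
  classical
  have hN3 : (3:ℝ) ≤ (Fintype.card S : ℝ) := by exact_mod_cast hS
  set N : ℝ := (Fintype.card S : ℝ) with hNdef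
  have hN0 : 0 < N := by linarith
  set L := Real.logb 2 N with hLdef
  have h2L : (2:ℝ) ^ L = N := Real.rpow_logb two_pos (by norm_num) hN0
  have hL1 : 1 < L := (Real.lt_logb_iff_rpow_lt one_lt_two hN0).2
    (by rw [Real.rpow_one]; linarith)
  have hcardS' : (S'.card : ℝ) ≤ N := by
    rw [hNdef]; exact_mod_cast Finset.card_le_univ S'
  rcases le_or_gt (Fintype.card S) 8 with h8 | h9
  · -- small case: take the bucket of a heavy element
    have hS'ne : S'.Nonempty := by
      by_contra hc
      rw [Finset.not_nonempty_iff_eq_empty] at hc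
      rw [hc, Finset.sum_empty] at hS'
      linarith
    have hcpos : (0:ℝ) < S'.card := by
      exact_mod_cast Finset.card_pos.2 hS'ne
    obtain ⟨a, haS, ha⟩ : ∃ a ∈ S', 1 / (S'.card : ℝ) ≤ w a := by
      apply Finset.exists_le_of_sum_le hS'ne
      rw [Finset.sum_const, nsmul_eq_mul]
      rw [mul_one_div, div_self (ne_of_gt hcpos)]
      exact hS'
    have hwa0 : 0 < w a := lt_of_lt_of_le (by positivity) ha
    have hwaN : 1 / N ≤ w a :=
      le_trans (one_div_le_one_div_of_le hcpos hcardS') ha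
    set s : ℕ := ⌈Real.logb 2 (w a)⁻¹⌉₊ with hsdef
    obtain ⟨hb1, hb2⟩ := aux_bucket (w a) hwa0 (hw1 a)
    set A : ℝ := (2:ℝ) ^ (-(s:ℤ)) with hAdef
    have hA0 : 0 < A := by positivity
    have hA2 : w a ≤ 2 * A := by
      rw [hAdef, ← aux_double]; exact hb2
    have hAlow : 1 / (2 * N) ≤ A := by
      have h1 : 1 / N ≤ 2 * A := le_trans hwaN hA2
      have h2 : 1 / (2 * N) = (1 / N) / 2 := by ring
      linarith
    refine ⟨s, ?_, ?_⟩
    · -- 1/N^2 ≤ A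
      have : 1 / N ^ 2 ≤ 1 / (2 * N) := by
        apply one_div_le_one_div_of_le (by positivity)
        nlinarith
      linarith
    · -- cardinality ≥ 1 suffices
      have hmem : a ∈ S'.filter (fun h => (2:ℝ) ^ (-(s:ℤ)) ≤ w h ∧
          w h ≤ (2:ℝ) ^ (-((s:ℤ) - 1))) := by
        apply Finset.mem_filter.2 ⟨haS, hb1, hb2⟩
      have hone : (1:ℝ) ≤ ((S'.filter (fun h => (2:ℝ) ^ (-(s:ℤ)) ≤ w h ∧
          w h ≤ (2:ℝ) ^ (-((s:ℤ) - 1)))).card : ℝ) := by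
        have := Finset.card_pos.2 ⟨a, hmem⟩
        exact_mod_cast this
      -- need 1/(6*A*L) ≤ 1, i.e. 1 ≤ 6*A*L, using A ≥ 1/(2N), L ≥ N/3
      have hLN3 : N / 3 ≤ L := by
        have hpow : (2:ℕ) ^ (Fintype.card S) ≤ (Fintype.card S) ^ 3 := by
          interval_cases (Fintype.card S) <;> norm_num
        have hpowR : (2:ℝ) ^ ((Fintype.card S : ℕ):ℝ) ≤ N ^ 3 := by
          rw [Real.rpow_natCast, hNdef]
          exact_mod_cast hpow
        have : N ≤ Real.logb 2 (N ^ 3) := by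
          rw [Real.le_logb_iff_rpow_le one_lt_two (by positivity)]
          exact hpowR
        rw [Real.logb_pow] at this
        rw [hLdef]
        push_cast at this ⊢
        linarith
      have h6AL : 1 ≤ 6 * A * L := by
        have t1 : 6 * (1 / (2 * N)) * (N / 3) = 1 := by
          field_simp
          ring
        nlinarith [mul_le_mul hAlow hLN3 (by positivity) (le_of_lt hA0)]
      calc (1:ℝ) / (6 * A * L) ≤ 1 := by
            rw [div_le_one (by linarith)]; exact h6AL
        _ ≤ _ := hone
  · -- large case: pigeonhole over dyadic buckets
    by_contra hcon
    push_neg at hcon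
    have hN9 : (9:ℝ) ≤ N := by
      have h : (9:ℕ) ≤ Fintype.card S := h9
      rw [hNdef]; exact_mod_cast h
    have hL3 : 3 < L := by
      rw [hLdef, Real.lt_logb_iff_rpow_lt one_lt_two hN0]
      have : (2:ℝ) ^ (3:ℝ) = 8 := by
        rw [show (3:ℝ) = ((3:ℕ):ℝ) by norm_num, Real.rpow_natCast]; norm_num
      rw [this]; linarith
    have hL0 : 0 < L := by linarith
    set m : ℕ := ⌊2 * L⌋₊ with hmdef
    have hm1 : (m:ℝ) ≤ 2 * L := Nat.floor_le (by positivity)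
    have hm2 : 2 * L < (m:ℝ) + 1 := Nat.lt_floor_add_one _
    -- rpow vs zpow for -m
    have hzr : ∀ k : ℕ, (2:ℝ) ^ (-(k:ℤ)) = (2:ℝ) ^ (-((k:ℕ):ℝ)) := by
      intro k
      rw [← Real.rpow_intCast]; norm_num
    have h2mlow : 1 / N ^ 2 ≤ (2:ℝ) ^ (-(m:ℤ)) := by
      rw [hzr m]
      have : (2:ℝ) ^ (-(2 * L)) ≤ (2:ℝ) ^ (-((m:ℕ):ℝ)) :=
        (Real.rpow_le_rpow_left_iff one_lt_two).2 (by linarith)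
      refine le_trans (le_of_eq ?_) this
      rw [show -(2 * L) = L * (-2) by ring, Real.rpow_mul (by norm_num), h2L]
      rw [Real.rpow_neg (le_of_lt hN0), show ((2:ℝ)) = ((2:ℕ):ℝ) by norm_num,
        Real.rpow_natCast]
      norm_num
    have h2mup : (2:ℝ) ^ (-(m:ℤ)) ≤ 2 / N ^ 2 := by
      rw [hzr m]
      have : (2:ℝ) ^ (-((m:ℕ):ℝ)) ≤ (2:ℝ) ^ (1 - 2 * L) :=
        (Real.rpow_le_rpow_left_iff one_lt_two).2 (by linarith)
      refine le_trans this (le_of_eq ?_)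
      rw [show (1 - 2*L) = 1 + L * (-2) by ring, Real.rpow_add (by norm_num),
        Real.rpow_one, Real.rpow_mul (by norm_num), h2L]
      rw [Real.rpow_neg (le_of_lt hN0), show ((2:ℝ)) = ((2:ℕ):ℝ) by norm_num,
        Real.rpow_natCast]
      norm_num
      rw [div_eq_mul_inv]
    -- every bucket index up to m is admissible, so its bucket is small
    set B : ℕ → Finset S := fun s => S'.filter (fun h => (2:ℝ) ^ (-(s:ℤ)) ≤ w h ∧
        w h ≤ (2:ℝ) ^ (-((s:ℤ) - 1))) with hBdef
    have hsmall : ∀ s ≤ m, ((B s).card : ℝ) < 1 / (6 * (2:ℝ) ^ (-(s:ℤ)) * L) := by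
      intro s hs
      apply hcon
      calc (1:ℝ) / N ^ 2 ≤ (2:ℝ) ^ (-(m:ℤ)) := h2mlow
        _ ≤ (2:ℝ) ^ (-(s:ℤ)) := by
            apply zpow_le_zpow_right₀ (by norm_num : (1:ℝ) ≤ 2)
            omega
    -- the heavy part T carries weight ≥ 1 - 2/N
    set T : Finset S := S'.filter (fun h => (2:ℝ) ^ (-(m:ℤ)) ≤ w h) with hTdef
    have hsplit : ∑ h ∈ T, w h + ∑ h ∈ S'.filter (fun h => ¬ ((2:ℝ) ^ (-(m:ℤ)) ≤ w h)), w h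
        = ∑ h ∈ S', w h := Finset.sum_filter_add_sum_filter_not S' _ w
    have hlow : ∑ h ∈ S'.filter (fun h => ¬ ((2:ℝ) ^ (-(m:ℤ)) ≤ w h)), w h ≤ 2 / N := by
      have hb : ∑ h ∈ S'.filter (fun h => ¬ ((2:ℝ) ^ (-(m:ℤ)) ≤ w h)), w h
          ≤ (S'.filter (fun h => ¬ ((2:ℝ) ^ (-(m:ℤ)) ≤ w h))).card • ((2:ℝ) ^ (-(m:ℤ))) := by
        apply Finset.sum_le_card_nsmul
        intro x hx
        have := (Finset.mem_filter.1 hx).2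
        exact le_of_lt (not_le.1 this)
      rw [nsmul_eq_mul] at hb
      have hcard2 : ((S'.filter (fun h => ¬ ((2:ℝ) ^ (-(m:ℤ)) ≤ w h))).card : ℝ) ≤ N :=
        le_trans (by exact_mod_cast Finset.card_le_card (Finset.filter_subset _ _)) hcardS'
      calc ∑ h ∈ S'.filter (fun h => ¬ ((2:ℝ) ^ (-(m:ℤ)) ≤ w h)), w h
          ≤ ((S'.filter (fun h => ¬ ((2:ℝ) ^ (-(m:ℤ)) ≤ w h))).card : ℝ) * ((2:ℝ) ^ (-(m:ℤ))) := hb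
        _ ≤ N * (2 / N ^ 2) := by
            apply mul_le_mul hcard2 h2mup (by positivity) (le_of_lt hN0)
        _ = 2 / N := by field_simp
    have hT1 : 1 - 2 / N ≤ ∑ h ∈ T, w h := by linarith
    -- T is covered by the buckets 0..m
    have hcover : T ⊆ (Finset.range (m+1)).biUnion B := by
      intro h hh
      obtain ⟨hhS', hhw⟩ := Finset.mem_filter.1 hh
      have hw0h : 0 < w h := lt_of_lt_of_le (by positivity) hhw
      obtain ⟨hb1, hb2⟩ := aux_bucket (w h) hw0h (hw1 h)
      have hsle : ⌈Real.logb 2 (w h)⁻¹⌉₊ ≤ m := aux_ceil_le (w h) hw0h m hhw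
      apply Finset.mem_biUnion.2
      exact ⟨⌈Real.logb 2 (w h)⁻¹⌉₊, Finset.mem_range.2 (by omega),
        Finset.mem_filter.2 ⟨hhS', hb1, hb2⟩⟩
    -- bound the total weight via bucket cardinalities
    have hTB : ∑ h ∈ T, w h ≤ ∑ s ∈ Finset.range (m+1), ∑ h ∈ B s, w h := by
      calc ∑ h ∈ T, w h ≤ ∑ h ∈ (Finset.range (m+1)).biUnion B, w h :=
            Finset.sum_le_sum_of_subset_of_nonneg hcover (fun i _ _ => hw0 i)
        _ ≤ _ := aux_sum_biUnion_le _ _ _ hw0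
    have hbucket : ∀ s ∈ Finset.range (m+1), ∑ h ∈ B s, w h < 1 / (3 * L) := by
      intro s hs
      have hsle : s ≤ m := by
        have := Finset.mem_range.1 hs; omega
      set A : ℝ := (2:ℝ) ^ (-(s:ℤ)) with hAdef
      have hA0 : 0 < A := by positivity
      have h1 : ∑ h ∈ B s, w h ≤ ((B s).card : ℝ) * (2 * A) := by
        have := Finset.sum_le_card_nsmul (B s) w ((2:ℝ) ^ (-((s:ℤ) - 1)))
          (fun x hx => (Finset.mem_filter.1 hx).2.2)
        rw [nsmul_eq_mul, aux_double] at this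
        exact this
      have h2 : ((B s).card : ℝ) * (2 * A) < (1 / (6 * A * L)) * (2 * A) := by
        apply mul_lt_mul_of_pos_right (hsmall s hsle) (by positivity)
      have h3 : (1 / (6 * A * L)) * (2 * A) = 1 / (3 * L) := by
        field_simp
        ring
      linarith
    have hsum : ∑ s ∈ Finset.range (m+1), ∑ h ∈ B s, w h
        < ∑ s ∈ Finset.range (m+1), (1 / (3 * L)) :=
      Finset.sum_lt_sum_of_nonempty ⟨0, Finset.mem_range.2 (by omega)⟩ hbucket
    have hconst : ∑ s ∈ Finset.range (m+1), (1 / (3 * L) : ℝ) = ((m:ℝ) + 1) / (3 * L) := by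
      rw [Finset.sum_const, Finset.card_range, nsmul_eq_mul]
      push_cast
      ring
    have hfinal : ((m:ℝ) + 1) / (3 * L) ≤ (2 * L + 1) / (3 * L) := by
      gcongr
    have hlast : (2 * L + 1) / (3 * L) < 1 - 2 / N := by
      rw [div_lt_iff₀ (by positivity)]
      have h2N : 2 / N ≤ 2 / 9 := by
        apply div_le_div_of_nonneg_left (by norm_num) (by norm_num) hN9
      nlinarith [mul_le_mul_of_nonneg_right h2N (le_of_lt hL0)]
    rw [hconst] at hsum
    linarith
end

section
/- Under the hypotheses of the previous claim (constraints (i) with constant $C$, (ii) with parameter $\Delta$, and additionally $\sum_{\ell \in B} z_\ell \geq |B|/K$ for some $K > 0$ and $z_\ell \leq 1$ for all $\ell$), for any subset $\hat{J} \subseteq J$, the blue neighborhood satisfies $|\Gamma_B(\hat{J})| \geq \frac{1}{2CK} \cdot \frac{x(\hat{J})}{x(J)} \cdot |B|$, where $x(T) = \sum_{j \in T} x_j$ (assume $x(J) > 0$). -/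
open Finset
open scoped Classical

/-- Blue-neighborhood lower bound: under the LP constraints with constant `C` and
parameter `Δ`, if additionally `∑ z ≥ |B|/K`, then for any `Jhat ⊆ J` the blue neighborhood
satisfies `|Γ_B(Jhat)| ≥ (1/(2CK)) · (x(Jhat)/x(J)) · |B|`. -/
theorem stmt_6 (B J : Type*) [Fintype B] [Fintype J]
    (Adj : B → J → Prop)
    (z : B → ℝ) (x : J → ℝ) (xe : B → J → ℝ)
    (C Δ K : ℝ) (hC : 0 < C) (hΔ : 0 < Δ) (hK : 0 < K)
    (hz0 : ∀ ℓ, 0 ≤ z ℓ) (hz1 : ∀ ℓ, z ℓ ≤ 1)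
    (hx0 : ∀ j, 0 ≤ x j) (hx1 : ∀ j, x j ≤ 1)
    (hxe0 : ∀ ℓ j, 0 ≤ xe ℓ j)
    (hxe_edge : ∀ ℓ j, ¬ Adj ℓ j → xe ℓ j = 0)
    (hℓ : ∀ ℓ : B,
      z ℓ ≤ ∑ j ∈ Finset.univ.filter (fun j => Adj ℓ j), xe ℓ j ∧
      ∑ j ∈ Finset.univ.filter (fun j => Adj ℓ j), xe ℓ j ≤ C * z ℓ)
    (hj : ∀ j : J,
      Δ * x j ≤ ∑ ℓ ∈ Finset.univ.filter (fun ℓ => Adj ℓ j), xe ℓ j ∧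
      ∑ ℓ ∈ Finset.univ.filter (fun ℓ => Adj ℓ j), xe ℓ j ≤ 2 * Δ * x j)
    (hzB : (Fintype.card B : ℝ) / K ≤ ∑ ℓ, z ℓ)
    (hxJ : 0 < ∑ j, x j)
    (Jhat : Finset J) :
    (1 / (2 * C * K)) * ((∑ j ∈ Jhat, x j) / (∑ j, x j)) * (Fintype.card B : ℝ) ≤
      ((Finset.univ.filter (fun ℓ : B => ∃ j ∈ Jhat, Adj ℓ j)).card : ℝ) := by
  classical
  set Γ := Finset.univ.filter (fun ℓ : B => ∃ j ∈ Jhat, Adj ℓ j) with hΓ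
  set xhat := ∑ j ∈ Jhat, x j with hxhatdef
  set xJ := ∑ j, x j with hxJdef
  have hxhat0 : 0 ≤ xhat := Finset.sum_nonneg fun j _ => hx0 j
  have hswap : ∀ (T : Finset J),
      (∑ j ∈ T, ∑ ℓ ∈ Finset.univ.filter (fun ℓ => Adj ℓ j), xe ℓ j)
        = ∑ ℓ : B, ∑ j ∈ T, if Adj ℓ j then xe ℓ j else 0 := by
    intro T
    rw [show (∑ j ∈ T, ∑ ℓ ∈ Finset.univ.filter (fun ℓ => Adj ℓ j), xe ℓ j)
        = ∑ j ∈ T, ∑ ℓ : B, if Adj ℓ j then xe ℓ j else 0 from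
      Finset.sum_congr rfl fun j _ => Finset.sum_filter _ _]
    exact Finset.sum_comm
  -- (a) : Δ * xhat ≤ C * |Γ|
  have ha : Δ * xhat ≤ C * (Γ.card : ℝ) := by
    have h1 : Δ * xhat ≤ ∑ j ∈ Jhat, ∑ ℓ ∈ Finset.univ.filter (fun ℓ => Adj ℓ j), xe ℓ j := by
      rw [Finset.mul_sum]
      exact Finset.sum_le_sum fun j _ => (hj j).1
    have h2 : (∑ j ∈ Jhat, ∑ ℓ ∈ Finset.univ.filter (fun ℓ => Adj ℓ j), xe ℓ j)
        ≤ ∑ ℓ ∈ Γ, C * z ℓ := by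
      rw [hswap Jhat, hΓ, Finset.sum_filter]
      apply Finset.sum_le_sum
      intro ℓ _
      by_cases hP : ∃ j ∈ Jhat, Adj ℓ j
      case neg =>
        rw [if_neg hP]
        apply le_of_eq
        apply Finset.sum_eq_zero
        intro j hjmem
        rw [if_neg]
        intro hadj
        exact hP ⟨j, hjmem, hadj⟩
      case pos =>
        rw [if_pos hP]
        calc (∑ j ∈ Jhat, if Adj ℓ j then xe ℓ j else 0)
            = ∑ j ∈ Jhat.filter (fun j => Adj ℓ j), xe ℓ j := (Finset.sum_filter _ _).symm
          _ ≤ ∑ j ∈ Finset.univ.filter (fun j => Adj ℓ j), xe ℓ j := by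
              apply Finset.sum_le_sum_of_subset_of_nonneg
              · intro j hjm
                simp only [Finset.mem_filter] at hjm ⊢
                exact ⟨Finset.mem_univ j, hjm.2⟩
              · intro j _ _; exact hxe0 ℓ j
          _ ≤ C * z ℓ := (hℓ ℓ).2
    have h3 : (∑ ℓ ∈ Γ, C * z ℓ) ≤ C * (Γ.card : ℝ) := by
      calc (∑ ℓ ∈ Γ, C * z ℓ) ≤ ∑ ℓ ∈ Γ, C * 1 :=
            Finset.sum_le_sum fun ℓ _ => by
              exact mul_le_mul_of_nonneg_left (hz1 ℓ) hC.le
        _ = C * (Γ.card : ℝ) := by simp [mul_comm]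
    linarith
  -- (b) : |B| ≤ 2 Δ K xJ
  have hb : (Fintype.card B : ℝ) ≤ 2 * Δ * K * xJ := by
    have h1 : (∑ ℓ, z ℓ) ≤ ∑ ℓ : B, ∑ j ∈ Finset.univ.filter (fun j => Adj ℓ j), xe ℓ j :=
      Finset.sum_le_sum fun ℓ _ => (hℓ ℓ).1
    have h2 : (∑ ℓ : B, ∑ j ∈ Finset.univ.filter (fun j => Adj ℓ j), xe ℓ j)
        = ∑ j : J, ∑ ℓ ∈ Finset.univ.filter (fun ℓ => Adj ℓ j), xe ℓ j := by
      rw [hswap Finset.univ]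
      exact Finset.sum_congr rfl fun ℓ _ => Finset.sum_filter _ _
    have h3 : (∑ j : J, ∑ ℓ ∈ Finset.univ.filter (fun ℓ => Adj ℓ j), xe ℓ j)
        ≤ 2 * Δ * xJ := by
      rw [hxJdef, Finset.mul_sum]
      exact Finset.sum_le_sum fun j _ => (hj j).2
    have h4 : (Fintype.card B : ℝ) / K ≤ 2 * Δ * xJ := by
      rw [h2] at h1; linarith
    rw [div_le_iff₀ hK] at h4
    linarith [h4]
  have heq : (1 / (2 * C * K)) * (xhat / xJ) * (Fintype.card B : ℝ)
      = (xhat * (Fintype.card B : ℝ)) / (2 * C * K * xJ) := by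
    field_simp
  rw [heq, div_le_iff₀ (by positivity)]
  nlinarith [mul_le_mul_of_nonneg_left ha (by positivity : (0:ℝ) ≤ 2 * K * xJ),
    mul_le_mul_of_nonneg_left hb hxhat0]
end

section
/- Under the same LP constraints with constant $C$ and parameter $\Delta$, and with $\sum_{\ell \in B} z_\ell \geq |B|/K$, for any $\hat{J} \subseteq J$ with $x(\hat J) > 0$, at least $\varepsilon |B|$ elements $\ell \in B$ satisfy $\sum_{j \in \Gamma_{\hat{J}}(\ell)} x^{\ell}_j \geq \frac{1}{4K} \cdot \frac{x(\hat{J})}{x(J)}$, where $\varepsilon = \frac{1}{4CK} \cdot \frac{x(\hat{J})}{x(J)}$. -/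
open Finset
open scoped Classical

/-- Fractional covering: under the LP constraints with constant `C`, parameter `Δ`, and
`∑ z ≥ |B|/K`, for any `Ĵ ⊆ J` with positive weight, at least `ε|B|` blue elements `ℓ`
satisfy `∑_{j ∈ Γ_Ĵ(ℓ)} x^ℓ_j ≥ (1/4K)·x(Ĵ)/x(J)`, where `ε = (1/(4CK))·x(Ĵ)/x(J)`. -/
theorem stmt_7 (B J : Type*) [Fintype B] [Fintype J]
    (Adj : B → J → Prop)
    (z : B → ℝ) (x : J → ℝ) (xe : B → J → ℝ)
    (C Δ K : ℝ) (hC : 0 < C) (hΔ : 0 < Δ) (hK : 0 < K)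
    (hz0 : ∀ ℓ, 0 ≤ z ℓ) (hz1 : ∀ ℓ, z ℓ ≤ 1)
    (hx0 : ∀ j, 0 ≤ x j) (hx1 : ∀ j, x j ≤ 1)
    (hxe0 : ∀ ℓ j, 0 ≤ xe ℓ j)
    (hxe_edge : ∀ ℓ j, ¬ Adj ℓ j → xe ℓ j = 0)
    (hℓ : ∀ ℓ : B,
      z ℓ ≤ ∑ j ∈ Finset.univ.filter (fun j => Adj ℓ j), xe ℓ j ∧
      ∑ j ∈ Finset.univ.filter (fun j => Adj ℓ j), xe ℓ j ≤ C * z ℓ)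
    (hj : ∀ j : J,
      Δ * x j ≤ ∑ ℓ ∈ Finset.univ.filter (fun ℓ => Adj ℓ j), xe ℓ j ∧
      ∑ ℓ ∈ Finset.univ.filter (fun ℓ => Adj ℓ j), xe ℓ j ≤ 2 * Δ * x j)
    (hzB : (Fintype.card B : ℝ) / K ≤ ∑ ℓ, z ℓ)
    (Jhat : Finset J) (hJhat : 0 < ∑ j ∈ Jhat, x j) :
    (1 / (4 * C * K)) * ((∑ j ∈ Jhat, x j) / (∑ j, x j)) * (Fintype.card B : ℝ) ≤
      ((Finset.univ.filter (fun ℓ : B =>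
          (1 / (4 * K)) * ((∑ j ∈ Jhat, x j) / (∑ j, x j)) ≤
            ∑ j ∈ Jhat.filter (fun j => Adj ℓ j), xe ℓ j)).card : ℝ) := by

  classical
  set xJ := ∑ j, x j with hxJdef
  have hxJpos : 0 < xJ :=
    lt_of_lt_of_le hJhat (Finset.sum_le_sum_of_subset_of_nonneg (Finset.subset_univ _)
      (fun j _ _ => hx0 j))
  set r := (∑ j ∈ Jhat, x j) / xJ with hrdef
  have hrpos : 0 < r := div_pos hJhat hxJpos
  set f := fun ℓ : B => ∑ j ∈ Jhat.filter (fun j => Adj ℓ j), xe ℓ j with hfdef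
  have hfeq : ∀ ℓ, f ℓ = ∑ j ∈ Jhat, xe ℓ j := by
    intro ℓ
    exact Finset.sum_filter_of_ne (fun j _ hne => by
      by_contra h; exact hne (hxe_edge ℓ j h))
  have huniveq : ∀ ℓ, ∑ j ∈ Finset.univ.filter (fun j => Adj ℓ j), xe ℓ j = ∑ j, xe ℓ j := by
    intro ℓ
    exact Finset.sum_filter_of_ne (fun j _ hne => by
      by_contra h; exact hne (hxe_edge ℓ j h))
  have hcoleq : ∀ j, ∑ ℓ ∈ Finset.univ.filter (fun ℓ => Adj ℓ j), xe ℓ j = ∑ ℓ, xe ℓ j := by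
    intro j
    exact Finset.sum_filter_of_ne (fun ℓ _ hne => by
      by_contra h; exact hne (hxe_edge ℓ j h))
  -- lower bound on S = ∑ ℓ, f ℓ
  have hS1 : Δ * (∑ j ∈ Jhat, x j) ≤ ∑ ℓ, f ℓ := by
    have : ∑ ℓ, f ℓ = ∑ j ∈ Jhat, ∑ ℓ, xe ℓ j := by
      simp only [hfeq]; exact Finset.sum_comm
    rw [this, Finset.mul_sum]
    refine Finset.sum_le_sum (fun j _ => ?_)
    rw [← hcoleq j]; exact (hj j).1
  -- |B|/K ≤ 2Δ xJ
  have hB2 : (Fintype.card B : ℝ) / K ≤ 2 * Δ * xJ := by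
    calc (Fintype.card B : ℝ) / K ≤ ∑ ℓ, z ℓ := hzB
      _ ≤ ∑ ℓ, ∑ j, xe ℓ j := by
          refine Finset.sum_le_sum (fun ℓ _ => ?_)
          rw [← huniveq ℓ]; exact (hℓ ℓ).1
      _ = ∑ j, ∑ ℓ, xe ℓ j := Finset.sum_comm
      _ ≤ ∑ j, 2 * Δ * x j := by
          refine Finset.sum_le_sum (fun j _ => ?_)
          rw [← hcoleq j]; exact (hj j).2
      _ = 2 * Δ * xJ := by rw [hxJdef, Finset.mul_sum]
  -- each f ℓ ≤ C
  have hfC : ∀ ℓ, f ℓ ≤ C := by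
    intro ℓ
    have h1 : f ℓ ≤ ∑ j ∈ Finset.univ.filter (fun j => Adj ℓ j), xe ℓ j := by
      rw [hfeq, huniveq]
      exact Finset.sum_le_sum_of_subset_of_nonneg (Finset.subset_univ _)
        (fun j _ _ => hxe0 ℓ j)
    calc f ℓ ≤ C * z ℓ := h1.trans (hℓ ℓ).2
      _ ≤ C * 1 := by nlinarith [hz1 ℓ]
      _ = C := mul_one C
  set t := (1 / (4 * K)) * r with htdef
  have htpos : 0 < t := by positivity
  set G := Finset.univ.filter (fun ℓ : B => t ≤ f ℓ) with hGdef
  -- upper bound on S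
  have hupper : ∑ ℓ, f ℓ ≤ (G.card : ℝ) * C + (Fintype.card B : ℝ) * t := by
    have hsplit : ∑ ℓ, f ℓ = ∑ ℓ ∈ G, f ℓ + ∑ ℓ ∈ Finset.univ.filter (fun ℓ => ¬ (t ≤ f ℓ)), f ℓ := by
      rw [hGdef]; exact (Finset.sum_filter_add_sum_filter_not _ _ _).symm
    rw [hsplit]
    have h1 : ∑ ℓ ∈ G, f ℓ ≤ (G.card : ℝ) * C := by
      calc ∑ ℓ ∈ G, f ℓ ≤ ∑ _ℓ ∈ G, C := Finset.sum_le_sum (fun ℓ _ => hfC ℓ)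
        _ = (G.card : ℝ) * C := by rw [Finset.sum_const, nsmul_eq_mul]
    have h2 : ∑ ℓ ∈ Finset.univ.filter (fun ℓ => ¬ (t ≤ f ℓ)), f ℓ ≤ (Fintype.card B : ℝ) * t := by
      calc ∑ ℓ ∈ Finset.univ.filter (fun ℓ => ¬ (t ≤ f ℓ)), f ℓ
          ≤ ∑ _ℓ ∈ Finset.univ.filter (fun ℓ => ¬ (t ≤ f ℓ)), t :=
            Finset.sum_le_sum (fun ℓ hℓ' => le_of_lt (lt_of_not_ge (Finset.mem_filter.mp hℓ').2))
        _ = ((Finset.univ.filter (fun ℓ => ¬ (t ≤ f ℓ))).card : ℝ) * t := by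
            rw [Finset.sum_const, nsmul_eq_mul]
        _ ≤ (Fintype.card B : ℝ) * t := by
            have := Finset.card_filter_le (Finset.univ : Finset B) (fun ℓ => ¬ (t ≤ f ℓ))
            have : ((Finset.univ.filter (fun ℓ => ¬ (t ≤ f ℓ))).card : ℝ) ≤ (Fintype.card B : ℝ) := by
              exact_mod_cast this
            nlinarith
    linarith
  -- combine
  have hJr : (∑ j ∈ Jhat, x j) = r * xJ := by
    rw [hrdef]; field_simp
  have hS2 : 2 * ((Fintype.card B : ℝ) * t) ≤ ∑ ℓ, f ℓ := by
    have hΔlb : (Fintype.card B : ℝ) / (2 * K * xJ) ≤ Δ := by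
      rw [div_le_iff₀ (by positivity)]
      nlinarith [hB2, div_le_iff₀ hK |>.mp hB2]
    calc 2 * ((Fintype.card B : ℝ) * t) = ((Fintype.card B : ℝ) / (2 * K * xJ)) * (r * xJ) := by
          rw [htdef]; field_simp; ring
      _ ≤ Δ * (r * xJ) := by
          apply mul_le_mul_of_nonneg_right hΔlb
          positivity
      _ = Δ * (∑ j ∈ Jhat, x j) := by rw [hJr]
      _ ≤ ∑ ℓ, f ℓ := hS1
  have hfinal : (Fintype.card B : ℝ) * t ≤ (G.card : ℝ) * C := by linarith
  have : (1 / (4 * C * K)) * r * (Fintype.card B : ℝ) ≤ (G.card : ℝ) := by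
    rw [htdef] at hfinal
    rw [div_mul_eq_mul_div, div_mul_eq_mul_div, div_le_iff₀ (by positivity)]
    have h4K : (0:ℝ) < 4 * K := by positivity
    have h2 := mul_le_mul_of_nonneg_left hfinal h4K.le
    rw [show 4 * K * ((Fintype.card B : ℝ) * (1 / (4 * K) * r)) = (Fintype.card B : ℝ) * r from by
      field_simp] at h2
    nlinarith [h2]
  convert this using 3
end

section
/- Let $B_D \subseteq B$ be a set of $k' \leq k$ elements, each contained in between $D$ and $2D$ sets of a collection $J_0$ (where $k \geq 1$, $D \geq 1$). If every $j \in J_0$ is retained independently with probability $p = \min(1, \ln(2k)/D)$, then with positive probability, simultaneously every $\ell \in B_D$ retains at least one containing set and at most $2e\ln(2k)$ containing sets. -/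
open Finset MeasureTheory
open scoped Classical ENNReal


section aux
variable {ι : Type*} [Fintype ι] (p : ℝ≥0∞) (hp1 : p ≤ 1)

lemma aux_singleton (f : ι → Bool) :
    (Measure.pi (fun _ : ι => ((PMF.bernoulli p.toNNReal (by simpa using ENNReal.toNNReal_mono ENNReal.one_ne_top hp1)).toMeasure))) {f}
      = ∏ i : ι, (cond (f i) p (1 - p)) := by
  have h : ({f} : Set (ι → Bool)) = Set.pi Set.univ (fun i => {f i}) := by
    ext g
    simp [Set.mem_pi, funext_iff]
  rw [h, Measure.pi_pi]
  refine Finset.prod_congr rfl fun i _ => ?_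
  rw [PMF.toMeasure_apply_singleton _ _ (measurableSet_singleton _)]
  refine (PMF.bernoulli_apply _ _).trans ?_
  cases f i <;> simp [ENNReal.coe_sub, ENNReal.coe_toNNReal (ne_top_of_le_ne_top ENNReal.one_ne_top hp1)]

lemma aux_set (s : Set (ι → Bool)) :
    (Measure.pi (fun _ : ι => ((PMF.bernoulli p.toNNReal (by simpa using ENNReal.toNNReal_mono ENNReal.one_ne_top hp1)).toMeasure))) s
      = ∑ f ∈ Finset.univ.filter (· ∈ s), ∏ i : ι, (cond (f i) p (1 - p)) := by
  have h : s = ⋃ f ∈ Finset.univ.filter (· ∈ s), ({f} : Set (ι → Bool)) := by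
    ext g; simp
  conv_lhs => rw [h]
  rw [measure_biUnion_finset]
  · exact Finset.sum_congr rfl fun f _ => aux_singleton p hp1 f
  · intro a _ b _ hab
    simp [Function.onFun, Set.disjoint_singleton, hab]
  · exact fun f _ => measurableSet_singleton f

lemma aux_cylinder (t : ι → Set Bool) :
    (Measure.pi (fun _ : ι => ((PMF.bernoulli p.toNNReal (by simpa using ENNReal.toNNReal_mono ENNReal.one_ne_top hp1)).toMeasure))) (Set.pi Set.univ t)
      = ∏ i : ι, ((PMF.bernoulli p.toNNReal (by simpa using ENNReal.toNNReal_mono ENNReal.one_ne_top hp1)).toMeasure (t i)) := Measure.pi_pi _ t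

end aux

section chernoff
variable {ι : Type*} [Fintype ι]

lemma real_chernoff (A : Finset ι) (q : ℝ) (hq0 : 0 ≤ q) (hq1 : q ≤ 1) (m : ℕ) :
    ∑ f ∈ Finset.univ.filter
        (fun f : ι → Bool => m ≤ (Finset.univ.filter (fun i => f i = true ∧ i ∈ A)).card),
      ∏ i : ι, (cond (f i) q (1 - q))
    ≤ Real.exp (-(m:ℝ)) * Real.exp (q * (Real.exp 1 - 1)) ^ A.card := by
  set w : Bool → ℝ := fun b => cond b q (1 - q) with hw
  have hw0 : ∀ b, 0 ≤ w b := by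
    intro b; cases b <;> simp [hw, hq0, hq1, sub_nonneg]
  set g : ι → Bool → ℝ := fun i b => w b * (if b = true ∧ i ∈ A then Real.exp 1 else 1)
    with hg
  have hg0 : ∀ i b, 0 ≤ g i b := by
    intro i b
    exact mul_nonneg (hw0 b) (by positivity)
  -- step 1 : termwise bound
  have step1 : ∀ f : ι → Bool,
      m ≤ (Finset.univ.filter (fun i => f i = true ∧ i ∈ A)).card →
      ∏ i : ι, w (f i) ≤ Real.exp (-(m:ℝ)) * ∏ i : ι, g i (f i) := by
    intro f hf
    have hprod : ∏ i : ι, g i (f i)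
        = (∏ i : ι, w (f i)) *
          Real.exp 1 ^ (Finset.univ.filter (fun i => f i = true ∧ i ∈ A)).card := by
      rw [hg]
      rw [Finset.prod_mul_distrib]
      congr 1
      rw [Finset.prod_ite, Finset.prod_const, Finset.prod_const_one, mul_one]
    rw [hprod]
    have h1 : Real.exp ((m:ℝ)) ≤
        Real.exp 1 ^ (Finset.univ.filter (fun i => f i = true ∧ i ∈ A)).card := by
      rw [← Real.exp_nat_mul]
      apply Real.exp_le_exp.2
      have : (m:ℝ) ≤ _ := Nat.cast_le.2 hf
      linarith [this]
    calc ∏ i : ι, w (f i) = Real.exp (-(m:ℝ)) * Real.exp ((m:ℝ)) * ∏ i : ι, w (f i) := by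
            rw [← Real.exp_add]; simp
      _ ≤ Real.exp (-(m:ℝ)) * (Real.exp 1 ^ (Finset.univ.filter
            (fun i => f i = true ∧ i ∈ A)).card) * ∏ i : ι, w (f i) := by
            apply mul_le_mul_of_nonneg_right _ (Finset.prod_nonneg fun i _ => hw0 _)
            exact mul_le_mul_of_nonneg_left h1 (Real.exp_nonneg _)
      _ = Real.exp (-(m:ℝ)) * ((∏ i : ι, w (f i)) * Real.exp 1 ^ (Finset.univ.filter
            (fun i => f i = true ∧ i ∈ A)).card) := by ring
  -- step 2 + 3 : sum over all f and factor
  have step2 : ∑ f ∈ Finset.univ.filter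
        (fun f : ι → Bool => m ≤ (Finset.univ.filter (fun i => f i = true ∧ i ∈ A)).card),
      ∏ i : ι, w (f i)
      ≤ Real.exp (-(m:ℝ)) * ∑ f : ι → Bool, ∏ i : ι, g i (f i) := by
    rw [Finset.mul_sum]
    calc ∑ f ∈ Finset.univ.filter
          (fun f : ι → Bool => m ≤ (Finset.univ.filter (fun i => f i = true ∧ i ∈ A)).card),
        ∏ i : ι, w (f i)
        ≤ ∑ f ∈ Finset.univ.filter
          (fun f : ι → Bool => m ≤ (Finset.univ.filter (fun i => f i = true ∧ i ∈ A)).card),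
          Real.exp (-(m:ℝ)) * ∏ i : ι, g i (f i) := by
          apply Finset.sum_le_sum
          intro f hf
          exact step1 f (Finset.mem_filter.1 hf).2
      _ ≤ ∑ f : ι → Bool, Real.exp (-(m:ℝ)) * ∏ i : ι, g i (f i) := by
          apply Finset.sum_le_sum_of_subset_of_nonneg (Finset.filter_subset _ _)
          intro f _ _
          exact mul_nonneg (Real.exp_nonneg _) (Finset.prod_nonneg fun i _ => hg0 i _)
  have step3 : ∑ f : ι → Bool, ∏ i : ι, g i (f i) = ∏ i : ι, ∑ b : Bool, g i b :=
    (Fintype.prod_sum g).symm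
  have step4 : ∏ i : ι, (∑ b : Bool, g i b) ≤ Real.exp (q * (Real.exp 1 - 1)) ^ A.card := by
    have hval : ∀ i : ι, ∑ b : Bool, g i b = if i ∈ A then 1 + q * (Real.exp 1 - 1) else 1 := by
      intro i
      rw [Fintype.sum_bool]
      by_cases hi : i ∈ A <;> simp [hg, hw, hi] <;> ring
    calc ∏ i : ι, (∑ b : Bool, g i b)
        = ∏ i : ι, (if i ∈ A then 1 + q * (Real.exp 1 - 1) else 1) := by
          exact Finset.prod_congr rfl fun i _ => hval i
      _ = (1 + q * (Real.exp 1 - 1)) ^ A.card := by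
          rw [Finset.prod_ite, Finset.prod_const, Finset.prod_const_one, mul_one]
          congr 2
          simp [Finset.filter_mem_eq_inter]
      _ ≤ Real.exp (q * (Real.exp 1 - 1)) ^ A.card := by
          apply pow_le_pow_left₀
          · have : 0 ≤ q * (Real.exp 1 - 1) := by
              apply mul_nonneg hq0
              have := Real.add_one_le_exp (1:ℝ)
              linarith
            linarith
          · have := Real.add_one_le_exp (q * (Real.exp 1 - 1))
            linarith
  calc ∑ f ∈ Finset.univ.filter
        (fun f : ι → Bool => m ≤ (Finset.univ.filter (fun i => f i = true ∧ i ∈ A)).card),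
      ∏ i : ι, (cond (f i) q (1 - q))
      ≤ Real.exp (-(m:ℝ)) * ∑ f : ι → Bool, ∏ i : ι, g i (f i) := step2
    _ = Real.exp (-(m:ℝ)) * ∏ i : ι, ∑ b : Bool, g i b := by rw [step3]
    _ ≤ Real.exp (-(m:ℝ)) * Real.exp (q * (Real.exp 1 - 1)) ^ A.card := by
        exact mul_le_mul_of_nonneg_left step4 (Real.exp_nonneg _)

end chernoff

/-- Probabilistic sparsification: if every `ℓ ∈ B_D` is contained in between `D` and
`2D` of the sets `S i`, and each set is retained independently with probability
`p = min 1 (ln(2k)/D)`, then with positive probability every `ℓ ∈ B_D` simultaneously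
retains at least one and at most `2e·ln(2k)` containing sets. -/
theorem stmt_12 (B ι : Type*) [Fintype B] [Fintype ι] (k k' D : ℕ)
    (hk : 1 ≤ k) (hD : 1 ≤ D) (hcard : Fintype.card B = k)
    (BD : Finset B) (hBD : BD.card = k') (hk' : k' ≤ k)
    (S : ι → Finset B)
    (hdeg : ∀ ℓ ∈ BD,
      D ≤ (Finset.univ.filter (fun i : ι => ℓ ∈ S i)).card ∧
      (Finset.univ.filter (fun i : ι => ℓ ∈ S i)).card ≤ 2 * D)
    (p : ℝ≥0∞) (hp : p = ENNReal.ofReal (min 1 (Real.log (2 * k) / D)))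
    (hp1 : p ≤ 1) :
    0 < (Measure.pi (fun _ : ι => ((PMF.bernoulli p.toNNReal (by simpa using ENNReal.toNNReal_mono ENNReal.one_ne_top hp1)).toMeasure)))
        {f : ι → Bool | ∀ ℓ ∈ BD,
          (1 ≤ (Finset.univ.filter (fun i : ι => f i = true ∧ ℓ ∈ S i)).card) ∧
          ((Finset.univ.filter (fun i : ι => f i = true ∧ ℓ ∈ S i)).card : ℝ) ≤
            2 * Real.exp 1 * Real.log (2 * k)} := by
  set μ := Measure.pi (fun _ : ι => ((PMF.bernoulli p.toNNReal (by simpa using ENNReal.toNNReal_mono ENNReal.one_ne_top hp1)).toMeasure)) with hμ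
  set q : ℝ := min 1 (Real.log (2 * k) / D) with hqdef
  -- basic facts
  have hk1 : (1:ℝ) ≤ k := by exact_mod_cast hk
  have hD1 : (1:ℝ) ≤ D := by exact_mod_cast hD
  have hD0 : (0:ℝ) < D := by linarith
  have hlog : 0 < Real.log (2 * k) := Real.log_pos (by push_cast; linarith)
  have hq0 : 0 ≤ q := le_min (by norm_num) (by positivity)
  have hq1 : q ≤ 1 := min_le_left _ _
  have hqD : q * D ≤ Real.log (2 * k) := by
    have h := min_le_right (1:ℝ) (Real.log (2 * k) / D)
    calc q * D ≤ (Real.log (2 * k) / D) * D := by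
          apply mul_le_mul_of_nonneg_right _ hD0.le
          exact h
      _ = Real.log (2 * k) := by field_simp
  have hcond : ∀ b : Bool, (cond b p (1 - p)) = ENNReal.ofReal (cond b q (1 - q)) := by
    intro b
    cases b
    · simp only [cond]
      rw [hp, ← ENNReal.ofReal_one, ← ENNReal.ofReal_sub _ hq0]
    · simp [hp]
  -- notation
  set A : B → Finset ι := fun ℓ => Finset.univ.filter (fun i : ι => ℓ ∈ S i) with hA
  set M : ℝ := 2 * Real.exp 1 * Real.log (2 * k) with hM
  have hM0 : 0 ≤ M := by positivity
  set m : ℕ := ⌊M⌋₊ + 1 with hm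
  have hMm : M < (m : ℝ) := by
    rw [hm]
    push_cast
    exact Nat.lt_floor_add_one M
  set G : Set (ι → Bool) :=
    {f : ι → Bool | ∀ ℓ ∈ BD,
      (1 ≤ (Finset.univ.filter (fun i : ι => f i = true ∧ ℓ ∈ S i)).card) ∧
      ((Finset.univ.filter (fun i : ι => f i = true ∧ ℓ ∈ S i)).card : ℝ) ≤
        2 * Real.exp 1 * Real.log (2 * k)} with hG
  set E0 : B → Set (ι → Bool) :=
    fun ℓ => Set.pi Set.univ (fun i => if ℓ ∈ S i then ({false} : Set Bool) else Set.univ)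
    with hE0
  set E1 : B → Set (ι → Bool) :=
    fun ℓ => {f : ι → Bool |
      m ≤ (Finset.univ.filter (fun i : ι => f i = true ∧ i ∈ A ℓ)).card} with hE1
  have hAcard : ∀ (f : ι → Bool) (ℓ : B),
      (Finset.univ.filter (fun i : ι => f i = true ∧ i ∈ A ℓ)).card
        = (Finset.univ.filter (fun i : ι => f i = true ∧ ℓ ∈ S i)).card := by
    intro f ℓ
    congr 1
    apply Finset.filter_congr
    intro i _
    simp [hA]
  -- inclusion
  have hsub : Gᶜ ⊆ ⋃ ℓ ∈ BD, (E0 ℓ ∪ E1 ℓ) := by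
    intro f hf
    simp only [hG, Set.mem_compl_iff, Set.mem_setOf_eq, not_forall] at hf
    obtain ⟨ℓ, hℓ, hbad⟩ := hf
    rw [Set.mem_iUnion₂]
    refine ⟨ℓ, hℓ, ?_⟩
    rw [not_and_or] at hbad
    rcases hbad with h0 | h1
    · left
      have h0' : (Finset.univ.filter (fun i : ι => f i = true ∧ ℓ ∈ S i)).card = 0 := by
        omega
      rw [Finset.card_eq_zero, Finset.filter_eq_empty_iff] at h0'
      rw [hE0]
      intro i _
      by_cases hi : ℓ ∈ S i
      · simp only [hi, if_true, Set.mem_singleton_iff]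
        have := h0' (Finset.mem_univ i)
        simp only [hi, and_true] at this
        simpa using this
      · simp [hi]
    · right
      rw [hE1]
      simp only [Set.mem_setOf_eq]
      rw [hAcard]
      push_neg at h1
      have := (Nat.floor_lt hM0).2 h1
      omega
  -- bound on E0
  have hE0bound : ∀ ℓ ∈ BD, μ (E0 ℓ) ≤ ENNReal.ofReal (1 / (2 * k)) := by
    intro ℓ hℓ
    have hcalc : μ (E0 ℓ) = (1 - p) ^ (A ℓ).card := by
      rw [hE0, hμ, aux_cylinder p hp1]
      have hfac : ∀ i : ι, (PMF.bernoulli p.toNNReal (by simpa using ENNReal.toNNReal_mono ENNReal.one_ne_top hp1)).toMeasure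
          (if ℓ ∈ S i then ({false} : Set Bool) else Set.univ)
          = if ℓ ∈ S i then (1 - p) else 1 := by
        intro i
        by_cases hi : ℓ ∈ S i
        · simp only [hi, if_true]
          rw [PMF.toMeasure_apply_singleton _ _ (measurableSet_singleton _)]
          refine (PMF.bernoulli_apply _ _).trans ?_
          simp [ENNReal.coe_toNNReal (ne_top_of_le_ne_top ENNReal.one_ne_top hp1)]
        · simp only [hi, if_false, measure_univ]
      rw [Finset.prod_congr rfl fun i _ => hfac i]
      rw [Finset.prod_ite, Finset.prod_const, Finset.prod_const_one, mul_one]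
    rw [hcalc]
    have h1p : (1 - p) = ENNReal.ofReal (1 - q) := by
      rw [hp, ← ENNReal.ofReal_one, ← ENNReal.ofReal_sub _ hq0]
    rw [h1p, ← ENNReal.ofReal_pow (by linarith : (0:ℝ) ≤ 1 - q)]
    apply ENNReal.ofReal_le_ofReal
    have hd := (hdeg ℓ hℓ).1
    rcases le_or_gt (Real.log (2*k) / D) 1 with hcase | hcase
    · have hqeq : q = Real.log (2*k) / D := min_eq_right hcase
      calc (1-q) ^ (A ℓ).card ≤ Real.exp (-q) ^ (A ℓ).card := by
            apply pow_le_pow_left₀ (by linarith)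
            have := Real.add_one_le_exp (-q); linarith
        _ = Real.exp (-(q * (A ℓ).card)) := by
            rw [← Real.exp_nat_mul]; congr 1; ring
        _ ≤ Real.exp (-(q * D)) := by
            apply Real.exp_le_exp.2
            have hdc : (D:ℝ) ≤ ((A ℓ).card : ℝ) := by exact_mod_cast hd
            nlinarith
        _ = Real.exp (-Real.log (2*(k:ℝ))) := by
            rw [hqeq]; congr 1; field_simp
        _ = 1 / (2*k) := by
            rw [Real.exp_neg, Real.exp_log (by positivity)]; ring
    · have hqeq : q = 1 := min_eq_left hcase.le
      have hcne : (A ℓ).card ≠ 0 := by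
        have hd' : D ≤ (A ℓ).card := hd
        omega
      rw [hqeq, sub_self, zero_pow hcne]
      positivity
  -- bound on E1
  have hE1bound : ∀ ℓ ∈ BD, μ (E1 ℓ) ≤ ENNReal.ofReal (1 / (4 * k)) := by
    intro ℓ hℓ
    have hcalc : μ (E1 ℓ) = ENNReal.ofReal
        (∑ f ∈ Finset.univ.filter (fun f : ι → Bool =>
            m ≤ (Finset.univ.filter (fun i : ι => f i = true ∧ i ∈ A ℓ)).card),
          ∏ i : ι, (cond (f i) q (1 - q))) := by
      rw [hμ, aux_set p hp1]
      rw [ENNReal.ofReal_sum_of_nonneg (fun f _ => Finset.prod_nonneg fun i _ => by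
        cases f i <;> simp [hq0, hq1, sub_nonneg])]
      refine Finset.sum_congr ?_ ?_
      · ext f
        simp [hE1]
      · intro f _
        rw [ENNReal.ofReal_prod_of_nonneg (fun i _ => by
          cases f i <;> simp [hq0, hq1, sub_nonneg])]
        exact Finset.prod_congr rfl fun i _ => hcond (f i)
    rw [hcalc]
    calc ENNReal.ofReal _ ≤ ENNReal.ofReal
          (Real.exp (-(m:ℝ)) * Real.exp (q * (Real.exp 1 - 1)) ^ (A ℓ).card) :=
          ENNReal.ofReal_le_ofReal (real_chernoff (A ℓ) q hq0 hq1 m)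
      _ ≤ ENNReal.ofReal (1 / (4*k)) := by
          apply ENNReal.ofReal_le_ofReal
          have hd2 := (hdeg ℓ hℓ).2
          have hdc : ((A ℓ).card : ℝ) ≤ 2*D := by exact_mod_cast hd2
          have he1 : (0:ℝ) ≤ Real.exp 1 - 1 := by
            have := Real.add_one_le_exp (1:ℝ); linarith
          have hqd2 : q * ((A ℓ).card : ℝ) ≤ 2 * Real.log (2*k) := by
            nlinarith
          calc Real.exp (-(m:ℝ)) * Real.exp (q * (Real.exp 1 - 1)) ^ (A ℓ).card
              = Real.exp (-(m:ℝ)) * Real.exp (((A ℓ).card : ℝ) * (q * (Real.exp 1 - 1))) := by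
                rw [← Real.exp_nat_mul]
            _ ≤ Real.exp (-M) * Real.exp (2 * Real.log (2*k) * (Real.exp 1 - 1)) := by
                apply mul_le_mul (Real.exp_le_exp.2 (by linarith)) (Real.exp_le_exp.2 (by nlinarith))
                  (Real.exp_nonneg _) (Real.exp_nonneg _)
            _ = Real.exp (-(2 * Real.log (2*(k:ℝ)))) := by
                rw [← Real.exp_add]; congr 1; rw [hM]; ring
            _ = 1 / (2*(k:ℝ))^2 := by
                rw [Real.exp_neg]
                congr 1
                rw [show (2:ℝ) * Real.log (2*(k:ℝ)) = Real.log (2*(k:ℝ)) + Real.log (2*(k:ℝ)) by ring,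
                  Real.exp_add, Real.exp_log (by positivity)]
                ring
            _ ≤ 1 / (4*(k:ℝ)) := by
                apply div_le_div_of_nonneg_left (by norm_num) (by positivity)
                nlinarith
  -- total bound
  have hGc : μ Gᶜ ≤ ENNReal.ofReal (3/4) := by
    calc μ Gᶜ ≤ μ (⋃ ℓ ∈ BD, (E0 ℓ ∪ E1 ℓ)) := measure_mono hsub
      _ ≤ ∑ ℓ ∈ BD, μ (E0 ℓ ∪ E1 ℓ) := measure_biUnion_finset_le BD _
      _ ≤ ∑ _ℓ ∈ BD, (ENNReal.ofReal (1/(2*k)) + ENNReal.ofReal (1/(4*k))) := by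
          apply Finset.sum_le_sum; intro ℓ hℓ
          calc μ (E0 ℓ ∪ E1 ℓ) ≤ μ (E0 ℓ) + μ (E1 ℓ) := measure_union_le _ _
            _ ≤ _ := add_le_add (hE0bound ℓ hℓ) (hE1bound ℓ hℓ)
      _ = BD.card • (ENNReal.ofReal (1/(2*k)) + ENNReal.ofReal (1/(4*k))) :=
          Finset.sum_const _
      _ ≤ ENNReal.ofReal (3/4) := by
          rw [← ENNReal.ofReal_add (by positivity) (by positivity), hBD, nsmul_eq_mul]
          have h1 : (k' : ℝ≥0∞) ≤ (k : ℝ≥0∞) := by exact_mod_cast hk'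
          calc (k':ℝ≥0∞) * ENNReal.ofReal (1/(2*(k:ℝ)) + 1/(4*(k:ℝ)))
              ≤ (k:ℝ≥0∞) * ENNReal.ofReal (1/(2*(k:ℝ)) + 1/(4*(k:ℝ))) :=
                mul_le_mul_left h1 _
            _ = ENNReal.ofReal ((k:ℝ) * (1/(2*(k:ℝ)) + 1/(4*(k:ℝ)))) := by
                rw [ENNReal.ofReal_mul (by positivity)]
                congr 1
                exact (ENNReal.ofReal_natCast k).symm
            _ ≤ ENNReal.ofReal (3/4) := by
                apply ENNReal.ofReal_le_ofReal
                have hkne : (k:ℝ) ≠ 0 := by positivity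
                rw [show (k:ℝ) * (1/(2*(k:ℝ)) + 1/(4*(k:ℝ))) = 3/4 by field_simp; ring]
  -- conclusion
  have hone : (1:ℝ≥0∞) ≤ μ G + μ Gᶜ := by
    have huniv : μ Set.univ = 1 := measure_univ
    calc (1:ℝ≥0∞) = μ Set.univ := huniv.symm
      _ = μ (G ∪ Gᶜ) := by rw [Set.union_compl_self]
      _ ≤ μ G + μ Gᶜ := measure_union_le _ _
  by_contra hcon
  push_neg at hcon
  have hzero : μ G = 0 := le_antisymm hcon zero_le
  rw [hzero, zero_add] at hone
  have hcontra : (1:ℝ≥0∞) ≤ ENNReal.ofReal (3/4) := le_trans hone hGc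
  have h34 : ENNReal.ofReal (3/4:ℝ) < 1 := by
    rw [show (1:ℝ≥0∞) = ENNReal.ofReal 1 from ENNReal.ofReal_one.symm]
    exact (ENNReal.ofReal_lt_ofReal_iff (by norm_num)).2 (by norm_num)
  exact absurd hcontra (not_le.2 h34)
end
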